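/- Let n ∈ ℕ with n ≥ 1, let μ be the product measure on ℝ^n whose coordinates are i.i.d. standard Gaussian N(0,1), let v ∈ ℝ^n be nonzero, and let p ∈ (0,1). Then for every measurable function w : ℝ^n → [0,1] with ∫ w dμ = p, one has ∫ ⟨v, ω⟩ · w(ω) dμ(ω) ≤ (‖v‖₂ / √(2π)) · exp(−Φ⁻¹(p)² / 2). -/

import Mathlib

open MeasureTheory ProbabilityTheory
open scoped RealInnerProductSpace

/-- The cumulative distribution function `Φ` of the standard Gaussian measure `N(0,1)` on `ℝ`. -/
noncomputable def Phi (x : ℝ) : ℝ := ((gaussianReal 0 1) (Set.Iic x)).toReal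

/-- The inverse `Φ⁻¹` of the standard Gaussian CDF on `(0,1)`. -/
noncomputable def PhiInv (p : ℝ) : ℝ := Function.invFun Phi p

namespace StmtAux

open Filter



noncomputable def phi (x : ℝ) : ℝ := (Real.sqrt (2 * Real.pi))⁻¹ * Real.exp (-x ^ 2 / 2)

lemma phi_pos (x : ℝ) : 0 < phi x := by
  apply mul_pos (inv_pos.2 (Real.sqrt_pos.2 (by positivity))) (Real.exp_pos _)

lemma phi_eq (x : ℝ) : gaussianPDFReal 0 1 x = phi x := by
  simp [gaussianPDFReal, phi]

lemma continuous_phi : Continuous phi := by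
  unfold phi; fun_prop

lemma phi_neg (x : ℝ) : phi (-x) = phi x := by simp [phi]

lemma integrable_phi : Integrable phi := by
  have h : Integrable (fun x : ℝ => Real.exp (-(1/2) * x ^ 2)) volume :=
    integrable_exp_neg_mul_sq (by norm_num)
  have := h.const_mul (Real.sqrt (2 * Real.pi))⁻¹
  refine this.congr (Eventually.of_forall fun x => ?_)
  simp only [phi]; ring_nf

lemma integrable_mul_phi : Integrable (fun x => x * phi x) := by
  have h : Integrable (fun x : ℝ => x * Real.exp (-(1/2) * x ^ 2)) volume :=
    integrable_mul_exp_neg_mul_sq (by norm_num)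
  have := h.const_mul (Real.sqrt (2 * Real.pi))⁻¹
  refine this.congr (Eventually.of_forall fun x => ?_)
  simp only [phi]; ring_nf

lemma integral_phi : ∫ x, phi x = 1 := by
  rw [← integral_gaussianPDFReal_eq_one 0 (v := 1) one_ne_zero]
  exact integral_congr_ae (Eventually.of_forall fun x => (phi_eq x).symm)

lemma gauss_eq : gaussianReal 0 1 = volume.withDensity (fun x => ENNReal.ofReal (phi x)) := by
  rw [gaussianReal_of_var_ne_zero 0 one_ne_zero]
  congr 1
  ext x
  rw [gaussianPDF_def]
  simp [phi_eq]

lemma Phi_eq (x : ℝ) : Phi x = ∫ t in Set.Iic x, phi t := by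
  rw [Phi, gaussianReal_apply_eq_integral 0 one_ne_zero,
    ENNReal.toReal_ofReal (setIntegral_nonneg measurableSet_Iic
      (fun t _ => gaussianPDFReal_nonneg 0 1 t))]
  exact integral_congr_ae (Eventually.of_forall fun t => phi_eq t)



lemma intInt (a b : ℝ) : IntervalIntegrable phi volume a b :=
  integrable_phi.intervalIntegrable

lemma Phi_sub (a b : ℝ) : Phi b - Phi a = ∫ t in a..b, phi t := by
  rw [Phi_eq, Phi_eq, intervalIntegral.integral_Iic_sub_Iic
    (integrable_phi.integrableOn) (integrable_phi.integrableOn)]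

lemma continuous_Phi : Continuous Phi := by
  have h : Continuous fun b => ∫ t in (0:ℝ)..b, phi t :=
    intervalIntegral.continuous_primitive intInt 0
  have : Phi = fun b => Phi 0 + ∫ t in (0:ℝ)..b, phi t := by
    funext b; rw [← Phi_sub 0 b]; ring
  rw [this]
  exact continuous_const.add h

lemma strictMono_Phi : StrictMono Phi := by
  intro a b hab
  have := intervalIntegral.intervalIntegral_pos_of_pos (f := phi) (intInt a b) phi_pos hab
  have h2 := Phi_sub a b
  linarith

lemma tendsto_Phi_atTop : Tendsto Phi atTop (nhds 1) := by
  have h := tendsto_measure_Iic_atTop (gaussianReal 0 1)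
  simp only [measure_univ] at h
  have := (ENNReal.tendsto_toReal (by norm_num : (1:ENNReal) ≠ ⊤)).comp h
  have h2 : Tendsto (ENNReal.toReal ∘ fun x => (gaussianReal 0 1) (Set.Iic x)) atTop (nhds 1) := by
    simpa using this
  exact h2

lemma Phi_nonneg (x : ℝ) : 0 ≤ Phi x := ENNReal.toReal_nonneg

lemma Phi_Ioi (x : ℝ) : ∫ t in Set.Ioi x, phi t = 1 - Phi x := by
  have := integral_add_compl (measurableSet_Iic (a := x)) integrable_phi (f := phi)
  rw [Set.compl_Iic] at this
  rw [Phi_eq, ← integral_phi]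
  linarith

lemma Phi_neg' (x : ℝ) : Phi (-x) = 1 - Phi x := by
  rw [Phi_eq, ← Phi_Ioi x]
  calc ∫ t in Set.Iic (-x), phi t = ∫ t in Set.Iic (-x), phi (-t) := by
        exact integral_congr_ae (Eventually.of_forall fun t => (phi_neg t).symm)
    _ = ∫ t in Set.Ioi (-(-x)), phi t := integral_comp_neg_Iic (-x) phi
    _ = ∫ t in Set.Ioi x, phi t := by rw [neg_neg]



lemma tendsto_Phi_atBot : Tendsto Phi atBot (nhds 0) := by
  have h : Tendsto (fun x : ℝ => 1 - Phi (-x)) atBot (nhds 0) := by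
    have h2 : Tendsto (fun x : ℝ => Phi (-x)) atBot (nhds 1) :=
      tendsto_Phi_atTop.comp tendsto_neg_atBot_atTop
    simpa using (tendsto_const_nhds (x := (1:ℝ))).sub h2
  refine h.congr fun x => ?_
  rw [Phi_neg']; ring

lemma Phi_PhiInv {p : ℝ} (hp : p ∈ Set.Ioo (0:ℝ) 1) : Phi (PhiInv p) = p := by
  apply Function.invFun_eq
  obtain ⟨a, ha⟩ : ∃ a, Phi a < p := by
    have := tendsto_Phi_atBot.eventually_lt_const hp.1
    exact this.exists
  obtain ⟨b, hb⟩ : ∃ b, p < Phi b := by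
    have := tendsto_Phi_atTop.eventually_const_lt hp.2
    exact this.exists
  have := intermediate_value_univ a b continuous_Phi
  exact this ⟨le_of_lt ha, le_of_lt hb⟩

lemma integral_Ioi_x_phi (s : ℝ) : ∫ x in Set.Ioi s, x * phi x = phi s := by
  have hderiv : ∀ x ∈ Set.Ioi s, HasDerivAt (fun y => -phi y) (x * phi x) x := by
    intro x _
    have h1 : HasDerivAt (fun y : ℝ => -y ^ 2 / 2) (-x) x := by
      have := ((hasDerivAt_pow 2 x).neg).div_const 2
      simpa using this.congr_deriv (by ring)
    have h2 := (h1.exp).const_mul (Real.sqrt (2 * Real.pi))⁻¹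
    have h3 := h2.neg
    refine h3.congr_deriv ?_
    simp only [phi]
    ring
  have hint : IntegrableOn (fun x => x * phi x) (Set.Ioi s) := integrable_mul_phi.integrableOn
  have htend : Tendsto (fun y => -phi y) atTop (nhds 0) := by
    have h0 : Tendsto phi atTop (nhds 0) := by
      have : Tendsto (fun x : ℝ => -x ^ 2 / 2) atTop atBot := by
        apply Tendsto.atBot_div_const (by norm_num)
        exact tendsto_neg_atBot_iff.mpr (tendsto_pow_atTop (by norm_num))
      have h4 := ((Real.tendsto_exp_atBot).comp this).const_mul (Real.sqrt (2 * Real.pi))⁻¹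
      rw [mul_zero] at h4
      exact h4
    simpa using h0.neg
  have hcont : ContinuousWithinAt (fun y => -phi y) (Set.Ici s) s :=
    (continuous_phi.neg).continuousWithinAt
  have := integral_Ioi_of_hasDerivAt_of_tendsto hcont hderiv hint htend
  rw [this]; ring

lemma integrable_abs_phi : Integrable (fun x => |x| * phi x) := by
  refine integrable_mul_phi.abs.congr (Eventually.of_forall fun x => ?_)
  simp [abs_mul, abs_of_pos (phi_pos x)]

lemma max_mul_indicator (s : ℝ) : (fun x => max (x - s) 0 * phi x)
    = Set.indicator (Set.Ioi s) (fun x => (x - s) * phi x) := by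
  funext x
  by_cases h : s < x
  · rw [Set.indicator_of_mem (Set.mem_Ioi.mpr h), max_eq_left (by linarith)]
  · rw [Set.indicator_of_notMem (by simpa using h), max_eq_right (by push_neg at h; linarith), zero_mul]

lemma integrable_max_mul (s : ℝ) : Integrable (fun x => max (x - s) 0 * phi x) := by
  refine Integrable.mono' ((integrable_abs_phi).add (integrable_phi.const_mul |s|))
    ((((continuous_id.sub continuous_const).max continuous_const).mul continuous_phi).aestronglyMeasurable)
    (Eventually.of_forall fun x => ?_)
  have h1 : |max (x - s) 0| ≤ |x| + |s| := by
    rw [abs_le]; constructor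
    · have := le_max_right (x - s) 0; have := abs_nonneg x; have := abs_nonneg s; linarith
    · apply max_le
      · have h2 := le_abs_self x; have h3 := neg_abs_le s; linarith
      · positivity
  calc ‖max (x - s) 0 * phi x‖ = |max (x - s) 0| * phi x := by
        rw [norm_mul, Real.norm_eq_abs, Real.norm_eq_abs, abs_of_pos (phi_pos x)]
    _ ≤ (|x| + |s|) * phi x := by nlinarith [phi_pos x]
    _ = |x| * phi x + |s| * phi x := by ring

lemma integral_gauss_max (s : ℝ) :
    ∫ x, max (x - s) 0 ∂(gaussianReal 0 1) = phi s - s * (1 - Phi s) := by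
  have hd : gaussianReal 0 1 = volume.withDensity (fun x => ((phi x).toNNReal : ENNReal)) :=
    gauss_eq
  rw [hd, integral_withDensity_eq_integral_smul
    (continuous_phi.measurable.real_toNNReal) (fun x => max (x - s) 0)]
  have : ∀ x : ℝ, (phi x).toNNReal • max (x - s) 0 = max (x - s) 0 * phi x := by
    intro x
    simp [NNReal.smul_def, Real.coe_toNNReal _ (phi_pos x).le, mul_comm]
  simp_rw [this]
  rw [max_mul_indicator, integral_indicator measurableSet_Ioi]
  have h1 : ∫ x in Set.Ioi s, (x - s) * phi x
      = (∫ x in Set.Ioi s, x * phi x) - ∫ x in Set.Ioi s, s * phi x := by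
    rw [← integral_sub integrable_mul_phi.integrableOn
      ((integrable_phi.const_mul s).integrableOn)]
    congr 1; funext x; ring
  rw [h1, integral_Ioi_x_phi, integral_const_mul, Phi_Ioi]

lemma integrable_id_gauss : Integrable (fun x => x) (gaussianReal 0 1) := by
  rw [gauss_eq, integrable_withDensity_iff (continuous_phi.measurable.ennreal_ofReal) (Eventually.of_forall fun x => ENNReal.ofReal_lt_top)]
  refine integrable_mul_phi.congr (Eventually.of_forall fun x => ?_)
  simp [ENNReal.toReal_ofReal (phi_pos x).le]

lemma integrable_max_gauss (s : ℝ) : Integrable (fun x => max (x - s) 0) (gaussianReal 0 1) := by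
  rw [gauss_eq, integrable_withDensity_iff (continuous_phi.measurable.ennreal_ofReal) (Eventually.of_forall fun x => ENNReal.ofReal_lt_top)]
  refine (integrable_max_mul s).congr (Eventually.of_forall fun x => ?_)
  simp [ENNReal.toReal_ofReal (phi_pos x).le]


lemma lintegral_pi_prod : ∀ (n : ℕ) (ν : Fin n → Measure ℝ), (∀ i, SigmaFinite (ν i)) →
    ∀ (h : Fin n → ℝ → ENNReal), (∀ i, Measurable (h i)) →
    ∫⁻ x : Fin n → ℝ, ∏ i, h i (x i) ∂Measure.pi ν = ∏ i, ∫⁻ y, h i y ∂ν i := by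
  intro n
  induction n with
  | zero => intro ν _ h _; simp [Measure.pi_of_empty]
  | succ n ih =>
    intro ν hsf h hm
    have := hsf
    have hmp := (measurePreserving_piFinSuccAbove ν 0).symm
    rw [← hmp.lintegral_comp (f := fun x => ∏ i, h i (x i))
      (Finset.measurable_prod _ fun i _ => (hm i).comp (measurable_pi_apply i))]
    have heq : ∀ z : ℝ × (Fin n → ℝ),
        (∏ i, h i (((MeasurableEquiv.piFinSuccAbove (fun _ => ℝ) 0).symm z) i))
        = h 0 z.1 * ∏ j, h (Fin.succ j) (z.2 j) := by
      intro z
      rw [Fin.prod_univ_succ]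
      simp [MeasurableEquiv.piFinSuccAbove_symm_apply, Fin.insertNthEquiv, Fin.insertNth_zero,
        Fin.zero_succAbove, Fin.cons_zero, Fin.cons_succ]
    simp_rw [heq]
    rw [lintegral_prod_mul (f := h 0) (g := fun y : Fin n → ℝ => ∏ j, h (Fin.succ j) (y j))
      ((hm 0).aemeasurable)
      ((Finset.measurable_prod _ fun j _ => (hm _).comp (measurable_pi_apply j)).aemeasurable),
      ih _ (fun i => hsf _) _ (fun j => hm _), Fin.prod_univ_succ]
    simp [Fin.zero_succAbove]


lemma volume_euclidean_eq_pi (n : ℕ) :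
    (volume : Measure (EuclideanSpace ℝ (Fin n)))
      = (Measure.pi (fun _ => (volume : Measure ℝ))).map (WithLp.toLp 2) :=
  (PiLp.volume_preserving_toLp (Fin n)).map_eq.symm



lemma pi_gauss (n : ℕ) :
    (Measure.pi (fun _ : Fin n => gaussianReal 0 1) : Measure (Fin n → ℝ))
      = (Measure.pi (fun _ => (volume : Measure ℝ))).withDensity
          (fun x => ENNReal.ofReal (∏ i, phi (x i))) := by
  refine Measure.pi_eq fun s hs => ?_
  rw [withDensity_apply _ (MeasurableSet.univ_pi hs), ← lintegral_indicator (MeasurableSet.univ_pi hs)]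
  have hind : ∀ x : Fin n → ℝ, (Set.univ.pi s).indicator (fun x => ENNReal.ofReal (∏ i, phi (x i))) x
      = ∏ i, (s i).indicator (fun t => ENNReal.ofReal (phi t)) (x i) := by
    intro x
    by_cases hx : x ∈ Set.univ.pi s
    · rw [Set.indicator_of_mem hx, ENNReal.ofReal_prod_of_nonneg (fun i _ => (phi_pos _).le)]
      exact Finset.prod_congr rfl fun i _ =>
        (Set.indicator_of_mem (hx i (Set.mem_univ i)) (fun t => ENNReal.ofReal (phi t))).symm
    · rw [Set.indicator_of_notMem hx]
      rw [Set.mem_univ_pi] at hx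
      push_neg at hx
      obtain ⟨i, hi⟩ := hx
      exact (Finset.prod_eq_zero (Finset.mem_univ i) (Set.indicator_of_notMem hi _)).symm
  simp_rw [hind]
  rw [lintegral_pi_prod n _ (fun i => inferInstance) _
    (fun i => (continuous_phi.measurable.ennreal_ofReal).indicator (hs i))]
  refine Finset.prod_congr rfl fun i _ => ?_
  rw [gauss_eq, withDensity_apply _ (hs i)]
  exact lintegral_indicator (hs i) _

lemma pi_gauss_euc (n : ℕ) :
    (Measure.pi (fun _ : Fin n => gaussianReal 0 1)).map (WithLp.toLp 2)
      = (volume : Measure (EuclideanSpace ℝ (Fin n))).withDensity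
          (fun x => ENNReal.ofReal (∏ i, phi (x i))) := by
  rw [pi_gauss, volume_euclidean_eq_pi]
  have hg : Measurable (fun x : Fin n → ℝ => ENNReal.ofReal (∏ i, phi (x i))) :=
    (Finset.measurable_prod _ fun i _ =>
      continuous_phi.measurable.comp (measurable_pi_apply i)).ennreal_ofReal
  refine Measure.ext fun s hs => ?_
  rw [Measure.map_apply (WithLp.measurable_toLp 2 _) hs,
    withDensity_apply _ ((WithLp.measurable_toLp 2 _) hs), withDensity_apply _ hs,
    ]
  exact (setLIntegral_map hs (hg.comp (WithLp.measurable_ofLp 2 _)) (WithLp.measurable_toLp 2 _)).symm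

lemma gauss_map (n : ℕ) (T : EuclideanSpace ℝ (Fin n) ≃ₗᵢ[ℝ] EuclideanSpace ℝ (Fin n)) :
    ((Measure.pi (fun _ : Fin n => gaussianReal 0 1)).map (WithLp.toLp 2)).map T
      = (Measure.pi (fun _ => gaussianReal 0 1)).map (WithLp.toLp 2) := by
  set D' : EuclideanSpace ℝ (Fin n) → ENNReal :=
    fun x => ENNReal.ofReal ((Real.sqrt (2 * Real.pi))⁻¹ ^ n * Real.exp (-‖x‖ ^ 2 / 2)) with hD'
  have hmD' : Measurable D' := by
    apply Measurable.ennreal_ofReal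
    exact (continuous_const.mul ((((continuous_norm.pow 2)).neg.div_const 2).rexp)).measurable
  have hprod : ∀ x : EuclideanSpace ℝ (Fin n), ENNReal.ofReal (∏ i, phi (x i)) = D' x := by
    intro x
    congr 1
    have hnorm : ‖x‖ ^ 2 = ∑ i, x i ^ 2 := by
      rw [EuclideanSpace.norm_eq]
      rw [Real.sq_sqrt (Finset.sum_nonneg fun i _ => sq_nonneg _)]
      exact Finset.sum_congr rfl fun i _ => by rw [Real.norm_eq_abs, sq_abs]
    simp_rw [phi, Finset.prod_mul_distrib, Finset.prod_const, Finset.card_univ, Fintype.card_fin,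
      ← Real.exp_sum]
    rw [hnorm]
    congr 1
    rw [← Finset.sum_div, ← Finset.sum_neg_distrib]
  have hpg : (Measure.pi (fun _ : Fin n => gaussianReal 0 1)).map (WithLp.toLp 2)
      = (volume : Measure (EuclideanSpace ℝ (Fin n))).withDensity D' := by
    rw [pi_gauss_euc]; congr 1; funext x; exact hprod x
  rw [hpg]
  refine Measure.ext fun s hs => ?_
  rw [Measure.map_apply T.continuous.measurable hs,
    withDensity_apply _ (hs.preimage T.continuous.measurable), withDensity_apply _ hs]
  have hTD : ∀ x, D' x = D' (T x) := fun x => by rw [hD']; simp [T.norm_map]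
  calc ∫⁻ x in ⇑T ⁻¹' s, D' x ∂volume = ∫⁻ x in ⇑T ⁻¹' s, D' (T x) ∂volume := by
        exact lintegral_congr fun x => hTD x
    _ = ∫⁻ y in s, D' y ∂(volume.map T) := (setLIntegral_map hs hmD' T.continuous.measurable).symm
    _ = ∫⁻ y in s, D' y ∂volume := by rw [T.measurePreserving.map_eq]

lemma gauss_marginal (n : ℕ) (i : Fin n) :
    ((Measure.pi (fun _ : Fin n => gaussianReal 0 1)).map (WithLp.toLp 2)).map
      (fun ω : EuclideanSpace ℝ (Fin n) => ω i) = gaussianReal 0 1 := by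
  classical
  rw [Measure.map_map (g := fun ω : EuclideanSpace ℝ (Fin n) => ω i)
    ((measurable_pi_apply i).comp (WithLp.measurable_ofLp 2 _))
    (WithLp.measurable_toLp 2 _)]
  show (Measure.pi (fun _ : Fin n => gaussianReal 0 1)).map (fun f : Fin n → ℝ => f i) = _
  refine Measure.ext fun s hs => ?_
  rw [Measure.map_apply (measurable_pi_apply i) hs]
  show (Measure.pi fun _ => gaussianReal 0 1) (Function.eval i ⁻¹' s) = _
  rw [Set.eval_preimage, Measure.pi_pi]
  rw [Finset.prod_eq_single i (fun j _ hj => by rw [Function.update_of_ne hj]; exact measure_univ)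
    (by simp)]
  rw [Function.update_self]


end StmtAux

open StmtAux Filter

/-- **Lemma A.3 (optimization value)**: among all measurable `w : ℝⁿ → [0,1]` with Gaussian
mean `p`, the correlation with the linear functional `ω ↦ ⟨v, ω⟩` is at most
`(‖v‖₂/√(2π)) · exp(−Φ⁻¹(p)²/2)`. -/
theorem stmt_4
    (n : ℕ) (hn : 1 ≤ n)
    (μ : Measure (EuclideanSpace ℝ (Fin n)))
    (hμ : μ = Measure.map (WithLp.toLp 2) (Measure.pi (fun _ => gaussianReal 0 1)))
    (v : EuclideanSpace ℝ (Fin n)) (hv : v ≠ 0)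
    (p : ℝ) (hp : p ∈ Set.Ioo (0 : ℝ) 1)
    (w : EuclideanSpace ℝ (Fin n) → ℝ) (hw : Measurable w)
    (hw01 : ∀ ω, w ω ∈ Set.Icc (0 : ℝ) 1)
    (hwp : ∫ ω, w ω ∂μ = p) :
    ∫ ω, ⟪v, ω⟫ * w ω ∂μ ≤
      ‖v‖ / Real.sqrt (2 * Real.pi) * Real.exp (-(PhiInv p) ^ 2 / 2) := by
  haveI : NeZero n := ⟨by omega⟩
  have hμprob : IsProbabilityMeasure μ := by
    have hP : IsProbabilityMeasure (Measure.pi fun _ : Fin n => gaussianReal 0 1 : Measure (Fin n → ℝ)) :=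
      inferInstance
    rw [hμ]; exact Measure.isProbabilityMeasure_map (WithLp.measurable_toLp 2 _).aemeasurable
  have hv' : 0 < ‖v‖ := norm_pos_iff.mpr hv
  -- orthonormal basis with b 0 = ‖v‖⁻¹ • v
  set e : EuclideanSpace ℝ (Fin n) := ‖v‖⁻¹ • v with he
  have hne : ‖e‖ = 1 := by
    rw [he, norm_smul, norm_inv, norm_norm, inv_mul_cancel₀ hv'.ne']
  have horth : Orthonormal ℝ (Set.restrict {0} (fun _ : Fin n => e)) := by
    constructor
    · intro i; exact hne
    · intro i j hij
      exact absurd (Subtype.ext ((Set.mem_singleton_iff.mp i.2).trans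
        (Set.mem_singleton_iff.mp j.2).symm)) hij
  obtain ⟨b, hb⟩ := Orthonormal.exists_orthonormalBasis_extension_of_card_eq
      (𝕜 := ℝ) (by simp [finrank_euclideanSpace]) horth
  have hb0 : b 0 = e := hb 0 rfl
  -- the linear functional
  set X : EuclideanSpace ℝ (Fin n) → ℝ := fun ω => ⟪v, ω⟫ with hX
  have hXeq : ∀ ω, X ω = ‖v‖ * (b.repr ω 0) := by
    intro ω
    rw [b.repr_apply_apply, hb0, he, real_inner_smul_left, hX]
    have hvv : ⟪v, ω⟫ = ‖v‖ * (‖v‖⁻¹ * ⟪v, ω⟫) := by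
      field_simp
    simpa using hvv
  have hmX : Measurable X := (continuous_const.inner continuous_id).measurable
  -- the law of X
  have hmap1 : μ.map (⇑b.repr) = μ := by rw [hμ]; exact gauss_map n b.repr
  have hmY : Measurable (fun ω : EuclideanSpace ℝ (Fin n) => b.repr ω 0) :=
    ((measurable_pi_apply (0 : Fin n)).comp (WithLp.measurable_ofLp 2 _)).comp
      b.repr.continuous.measurable
  have hmap2 : μ.map (fun ω => b.repr ω 0) = gaussianReal 0 1 := by
    have hmm := Measure.map_map (μ := μ) (g := fun f : EuclideanSpace ℝ (Fin n) => f 0)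
      ((measurable_pi_apply (0 : Fin n)).comp (WithLp.measurable_ofLp 2 _))
      b.repr.continuous.measurable
    rw [hmap1] at hmm
    rw [show (fun ω : EuclideanSpace ℝ (Fin n) => b.repr ω 0)
      = (fun f : EuclideanSpace ℝ (Fin n) => f 0) ∘ ⇑b.repr from rfl, ← hmm, hμ]
    exact gauss_marginal n 0
  have hlawX : μ.map X = (gaussianReal 0 1).map (fun y => ‖v‖ * y) := by
    have hmm := Measure.map_map (μ := μ) (g := fun y : ℝ => ‖v‖ * y)
      (measurable_id.const_mul ‖v‖) hmY
    rw [hmap2] at hmm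
    rw [show X = (fun y : ℝ => ‖v‖ * y) ∘ (fun ω => b.repr ω 0) from funext hXeq, ← hmm]
  -- abbreviations
  set x0 := PhiInv p with hx0
  set s : ℝ := -x0 with hs
  set t : ℝ := ‖v‖ * s with ht
  have hPhis : 1 - Phi s = p := by
    rw [hs, Phi_neg', hx0, Phi_PhiInv hp]; ring
  have hmaxcont : ∀ (c : ℝ), AEStronglyMeasurable (fun y : ℝ => max (y - c) 0)
      ((gaussianReal 0 1).map (fun y => ‖v‖ * y)) :=
    fun c => ((continuous_id.sub continuous_const).max continuous_const).aestronglyMeasurable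
  have hcmax : ∀ c : ℝ, Continuous (fun y : ℝ => max (y - c) 0) := by
    intro c; exact Continuous.max (by fun_prop) continuous_const
  have hmax : ∀ y : ℝ, max (‖v‖ * y - t) 0 = ‖v‖ * max (y - s) 0 := by
    intro y
    rw [mul_max_of_nonneg _ _ hv'.le, mul_zero, mul_sub, ht]
  -- integrability
  have hXint : Integrable X μ := by
    have h2 : Integrable id (μ.map X) := by
      rw [hlawX, integrable_map_measure aestronglyMeasurable_id
        ((show Measurable (fun y : ℝ => ‖v‖ * y) by fun_prop).aemeasurable)]
      exact integrable_id_gauss.const_mul ‖v‖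
    exact (integrable_map_measure aestronglyMeasurable_id hmX.aemeasurable).mp h2
  have hwint : Integrable w μ := by
    refine (integrable_const (1:ℝ)).mono' hw.aestronglyMeasurable
      (Eventually.of_forall fun ω => ?_)
    rw [Real.norm_eq_abs, abs_of_nonneg (hw01 ω).1]
    simpa using (hw01 ω).2
  have hXwint : Integrable (fun ω => X ω * w ω) μ := by
    have := hXint.bdd_mul (f := w) hw.aestronglyMeasurable
      (c := 1) (Eventually.of_forall fun ω => by rw [Real.norm_eq_abs, abs_of_nonneg (hw01 ω).1]; exact (hw01 ω).2)
    exact this.congr (Eventually.of_forall fun ω => mul_comm _ _)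
  have hmaxint : Integrable (fun ω => max (X ω - t) 0) μ := by
    have h1 : Integrable (fun y => max (y - t) 0) ((gaussianReal 0 1).map (fun y => ‖v‖ * y)) := by
      rw [integrable_map_measure
        ((hcmax _).aestronglyMeasurable)
        ((show Measurable (fun y : ℝ => ‖v‖ * y) by fun_prop).aemeasurable)]
      have hco : ((fun y => max (y - t) 0) ∘ fun y : ℝ => ‖v‖ * y)
          = fun y => ‖v‖ * max (y - s) 0 := by
        funext y; simp only [Function.comp_apply]; exact hmax y
      rw [hco]
      exact (integrable_max_gauss s).const_mul ‖v‖
    rw [← hlawX] at h1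
    have := (integrable_map_measure
      ((hcmax _).aestronglyMeasurable)
      hmX.aemeasurable).mp h1
    exact this
  -- pointwise inequality
  have hpw : ∀ ω, X ω * w ω - t * w ω ≤ max (X ω - t) 0 := by
    intro ω
    obtain ⟨h0, h1⟩ := hw01 ω
    rcases le_total (X ω - t) 0 with h | h
    · have h2 := le_max_right (X ω - t) 0
      nlinarith
    · have h2 := le_max_left (X ω - t) 0
      nlinarith
  -- value of the max integral
  have hmaxeq : ∫ ω, max (X ω - t) 0 ∂μ = ‖v‖ * (phi s - s * (1 - Phi s)) := by
    have h1 : ∫ ω, max (X ω - t) 0 ∂μ = ∫ y, max (y - t) 0 ∂(μ.map X) :=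
      (integral_map hmX.aemeasurable
        ((hcmax _).aestronglyMeasurable)).symm
    rw [h1, hlawX, integral_map ((show Measurable (fun y : ℝ => ‖v‖ * y) by fun_prop).aemeasurable)
      ((hcmax _).aestronglyMeasurable)]
    simp_rw [hmax]
    rw [integral_const_mul, integral_gauss_max s]
  calc ∫ ω, ⟪v, ω⟫ * w ω ∂μ
      = ∫ ω, (X ω * w ω - t * w ω) ∂μ + t * ∫ ω, w ω ∂μ := by
        rw [integral_sub hXwint (hwint.const_mul t), integral_const_mul]; ring
    _ ≤ ∫ ω, max (X ω - t) 0 ∂μ + t * p := by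
        refine add_le_add (integral_mono (hXwint.sub (hwint.const_mul t)) hmaxint hpw) ?_
        rw [hwp]
    _ = ‖v‖ * (phi s - s * (1 - Phi s)) + t * p := by rw [hmaxeq]
    _ = ‖v‖ * phi s := by rw [hPhis, ht]; ring
    _ = ‖v‖ / Real.sqrt (2 * Real.pi) * Real.exp (-(PhiInv p) ^ 2 / 2) := by
        have hsq : s ^ 2 = (PhiInv p) ^ 2 := by rw [hs, hx0]; ring
        rw [phi, hsq]
        ring
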